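/- With bounded rate kernel λ, for each y ∈ O and each μ ∈ Δ_y, and for every ε with 0 < ε < (sup_{x} λ(x))⁻¹, the measure μ + ε F_y(μ) belongs to Δ_y; that is, μ + ε F_y(μ) is a nonnegative measure, has total mass 1, and is concentrated on h⁻¹(y). -/

import Mathlib

open MeasureTheory

/-- Integral of a function against a finite signed measure (via the Jordan decomposition). -/
noncomputable def sInt {I : Type*} [MeasurableSpace I] (ξ : SignedMeasure I) (f : I → ℝ) : ℝ :=
  (∫ x, f x ∂ξ.toJordanDecomposition.posPart) - ∫ x, f x ∂ξ.toJordanDecomposition.negPart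

/-- The vector field `F_y(ν) := B_y ν − ν · (B_y ν)(I)`. -/
noncomputable def Fy {I : Type*} [MeasurableSpace I]
    (B : SignedMeasure I → SignedMeasure I) (ξ : SignedMeasure I) : SignedMeasure I :=
  B ξ - ((B ξ) Set.univ) • ξ

/-- `Δ_y`: probability measures concentrated on `h⁻¹(y)`. -/
def DeltaY {I O : Type*} [MeasurableSpace I] (h : I → O) (y : O) : Set (SignedMeasure I) :=
  {ξ | (∀ A : Set I, MeasurableSet A → 0 ≤ ξ A) ∧ ξ Set.univ = 1 ∧ ξ ((h ⁻¹' {y})ᶜ) = 0}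

/-- With bounded rate kernel, for each `y ∈ O`, `μ ∈ Δ_y` and every
`0 < ε < (sup_x λ(x))⁻¹`, the signed measure `μ + ε F_y(μ)` belongs to `Δ_y`:
it is nonnegative, has total mass `1`, and is concentrated on `h⁻¹(y)`. -/
theorem add_eps_Fy_mem_DeltaY {I O : Type*}
    [MetricSpace I] [MeasurableSpace I] [BorelSpace I]
    [SecondCountableTopology I] [CompleteSpace I]
    [MetricSpace O] [MeasurableSpace O] [BorelSpace O]
    [SecondCountableTopology O] [CompleteSpace O]
    (h : I → O) (hh : Measurable h)
    (κ : ProbabilityTheory.Kernel I I) (hdiag : ∀ x, κ x {x} = 0)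
    (C : ℝ) (hC : ∀ x, κ x Set.univ ≤ ENNReal.ofReal C)
    (y : O) (B : SignedMeasure I → SignedMeasure I)
    (hB : ∀ (ξ : SignedMeasure I) (A : Set I), MeasurableSet A →
      B ξ A = sInt ξ (fun x => (κ x (A ∩ h ⁻¹' {y})).toReal)
              - sInt ξ (Set.indicator A fun z => (κ z Set.univ).toReal))
    (μ : SignedMeasure I) (hμ : μ ∈ DeltaY h y)
    (ε : ℝ) (hε : 0 < ε) (hεC : ε * C < 1) :
    (∀ A : Set I, MeasurableSet A → 0 ≤ (μ + ε • Fy B μ) A) ∧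
    (μ + ε • Fy B μ) Set.univ = 1 ∧
    (μ + ε • Fy B μ) ((h ⁻¹' {y})ᶜ) = 0 := by
  classical
  obtain ⟨hpos, huniv, hconc⟩ := hμ
  set m := μ.toJordanDecomposition.posPart with hm
  set n := μ.toJordanDecomposition.negPart with hnn
  have happly0 : ∀ A : Set I, MeasurableSet A →
      μ A = (m A).toReal - (n A).toReal := by
    intro A hA
    conv_lhs => rw [← μ.toSignedMeasure_toJordanDecomposition]
    rw [JordanDecomposition.toSignedMeasure, VectorMeasure.sub_apply,
      Measure.toSignedMeasure_apply_measurable hA,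
      Measure.toSignedMeasure_apply_measurable hA]
    rfl
  -- negPart vanishes
  obtain ⟨s, hs, hms, hnsc⟩ := μ.toJordanDecomposition.mutuallySingular
  have hn0 : n = 0 := by
    have h1 := hpos s hs
    rw [happly0 s hs] at h1
    rw [show μ.toJordanDecomposition.posPart s = m s from rfl] at hms
    rw [hms] at h1
    simp only [ENNReal.toReal_zero, zero_sub, neg_nonneg] at h1
    have hts : (n s).toReal = 0 := le_antisymm h1 ENNReal.toReal_nonneg
    have hns : n s = 0 := by
      rcases (ENNReal.toReal_eq_zero_iff _).mp hts with h | h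
      · exact h
      · exact absurd h (measure_ne_top n s)
    have huz : n Set.univ = 0 := by
      have hle : n Set.univ ≤ n s + n sᶜ := by
        rw [← Set.union_compl_self s]; exact measure_union_le s sᶜ
      rw [hns, hnsc, add_zero] at hle
      exact le_antisymm hle zero_le
    exact Measure.measure_univ_eq_zero.mp huz
  have happly : ∀ A : Set I, MeasurableSet A → μ A = (m A).toReal := by
    intro A hA; rw [happly0 A hA, hn0]; simp
  have hsInt : ∀ f : I → ℝ, sInt μ f = ∫ x, f x ∂m := by
    intro f
    rw [sInt, ← hm, ← hnn, hn0, integral_zero_measure, sub_zero]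
  have hpre : MeasurableSet (h ⁻¹' {y}) := hh (measurableSet_singleton y)
  -- bound on the rates
  set C' : ℝ := max C 0 with hC'
  have hC'0 : 0 ≤ C' := le_max_right _ _
  have hεC' : ε * C' < 1 := by
    rcases le_total C 0 with hc | hc
    · rw [hC', max_eq_right hc, mul_zero]; norm_num
    · rwa [hC', max_eq_left hc]
  have hfin : ∀ x, κ x Set.univ ≠ ⊤ := fun x =>
    ((hC x).trans_lt ENNReal.ofReal_lt_top).ne
  have hgle : ∀ x, (κ x Set.univ).toReal ≤ C' := by
    intro x
    calc (κ x Set.univ).toReal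
        ≤ (ENNReal.ofReal C').toReal :=
          ENNReal.toReal_mono (by simp) ((hC x).trans
            (ENNReal.ofReal_le_ofReal (le_max_left _ _)))
      _ = C' := ENNReal.toReal_ofReal hC'0
  have hsle : ∀ (A : Set I) x, (κ x A).toReal ≤ (κ x Set.univ).toReal := by
    intro A x
    exact ENNReal.toReal_mono (hfin x) (measure_mono (Set.subset_univ A))
  have hint : ∀ A : Set I, MeasurableSet A →
      Integrable (fun x => (κ x A).toReal) m := by
    intro A hA
    refine ⟨((ProbabilityTheory.Kernel.measurable_coe κ hA).ennreal_toReal).aestronglyMeasurable, ?_⟩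
    refine HasFiniteIntegral.of_bounded (C := C') (ae_of_all _ fun x => ?_)
    rw [Real.norm_eq_abs, abs_of_nonneg ENNReal.toReal_nonneg]
    exact (hsle A x).trans (hgle x)
  -- formula for B μ
  have hBA : ∀ A : Set I, MeasurableSet A →
      B μ A = (∫ x, (κ x (A ∩ h ⁻¹' {y})).toReal ∂m)
        - ∫ x in A, (κ x Set.univ).toReal ∂m := by
    intro A hA
    rw [hB μ A hA, hsInt, hsInt, integral_indicator hA]
  have hcle : B μ Set.univ ≤ 0 := by
    rw [hBA _ MeasurableSet.univ, Measure.restrict_univ, Set.univ_inter, sub_nonpos]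
    exact integral_mono (hint _ hpre) (hint _ MeasurableSet.univ)
      (fun x => hsle _ x)
  -- pointwise expansion
  have hexp : ∀ A : Set I, (μ + ε • Fy B μ) A
      = μ A + ε * (B μ A - B μ Set.univ * μ A) := by
    intro A
    rw [VectorMeasure.add_apply, VectorMeasure.smul_apply, Fy,
      VectorMeasure.sub_apply, VectorMeasure.smul_apply, smul_eq_mul, smul_eq_mul]
  refine ⟨?_, ?_, ?_⟩
  · -- nonnegativity
    intro A hA
    rw [hexp, hBA A hA]
    have hP : 0 ≤ ∫ x, (κ x (A ∩ h ⁻¹' {y})).toReal ∂m :=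
      integral_nonneg fun x => ENNReal.toReal_nonneg
    have hμA : 0 ≤ μ A := hpos A hA
    have hG : ∫ x in A, (κ x Set.univ).toReal ∂m ≤ C' * μ A := by
      have hbd := norm_integral_le_of_norm_le_const (μ := m.restrict A)
        (f := fun x => (κ x Set.univ).toReal) (C := C')
        (ae_of_all _ fun x => by
          rw [Real.norm_eq_abs, abs_of_nonneg ENNReal.toReal_nonneg]
          exact hgle x)
      rw [measureReal_restrict_apply_univ] at hbd
      rw [happly A hA]
      exact (le_abs_self _).trans hbd
    nlinarith [mul_nonneg hε.le (mul_nonneg (neg_nonneg.2 hcle) hμA),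
      mul_nonneg hε.le hP]
  · -- total mass
    rw [hexp, huniv]; ring
  · -- concentration
    have hmA : m ((h ⁻¹' {y})ᶜ) = 0 := by
      have := happly _ hpre.compl
      rw [hconc] at this
      rcases (ENNReal.toReal_eq_zero_iff _).mp this.symm with h' | h'
      · exact h'
      · exact absurd h' (measure_ne_top m _)
    rw [hexp, hconc, hBA _ hpre.compl, Set.compl_inter_self,
      Measure.restrict_eq_zero.mpr hmA]
    simp
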